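/- Let A be an abelian category. Suppose the quadrangle (f : X ⟶ Y, x : X ⟶ X', y : Y ⟶ Y', f' : X' ⟶ Y') with f ≫ y = x ≫ f' is a weak square, and suppose that the object X' is both injective and projective. If the image objects of f : X ⟶ Y, of x : X ⟶ X', and of y : Y ⟶ Y' are each both injective and projective, then the image object of f' : X' ⟶ Y' and the image object of x ≫ f' : X ⟶ Y' are both injective and projective as well. -/
import Mathlib


open CategoryTheory CategoryTheory.Limits

/-- A commutative quadrangle `(f, g, h, k)` (with `f ≫ h = g ≫ k`) in an abelian category is a
*weak square* if its diagonal sequence `A ⟶ B ⊞ C ⟶ D`, with first morphism `biprod.lift f g`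
and second morphism `biprod.desc h (-k)`, is exact at `B ⊞ C`. -/
def IsWeakSquare {A : Type*} [Category A] [Abelian A] {W X Y Z : A}
    (f : W ⟶ X) (g : W ⟶ Y) (h : X ⟶ Z) (k : Y ⟶ Z) : Prop :=
  ∃ w : biprod.lift f g ≫ biprod.desc h (-k) = 0,
    (ShortComplex.mk (biprod.lift f g) (biprod.desc h (-k)) w).Exact

section AuxRetract

variable {C : Type*} [Category C]

/-- A retract of an injective object is injective. -/
lemma injective_of_retract'' {A B : C} (s : A ⟶ B) (t : B ⟶ A) (hst : s ≫ t = 𝟙 A)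
    (hB : Injective B) : Injective A := by
  constructor
  intro U V φ i hi
  refine ⟨Injective.factorThru (φ ≫ s) i ≫ t, ?_⟩
  rw [← Category.assoc, Injective.comp_factorThru, Category.assoc, hst, Category.comp_id]

/-- A retract of a projective object is projective. -/
lemma projective_of_retract'' {A B : C} (s : A ⟶ B) (t : B ⟶ A) (hst : s ≫ t = 𝟙 A)
    (hB : Projective B) : Projective A := by
  constructor
  intro E V φ e he
  refine ⟨s ≫ Projective.factorThru (t ≫ φ) e, ?_⟩
  rw [Category.assoc, Projective.factorThru_comp, ← Category.assoc, hst, Category.id_comp]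

end AuxRetract

/-- Given a weak square `(f, x, y, f')` with `X'` both injective and projective, if the images
of `f`, `x` and `y` are each both injective and projective, then so are the image of `f'` and
the image of `x ≫ f'`. -/
theorem bijective_images_of_weakSquare {A : Type*} [Category A] [Abelian A]
    {X Y X' Y' : A} (f : X ⟶ Y) (x : X ⟶ X') (y : Y ⟶ Y') (f' : X' ⟶ Y')
    (comm : f ≫ y = x ≫ f') (ws : IsWeakSquare f x y f')
    (hX' : Injective X' ∧ Projective X')
    (hf : Injective (image f) ∧ Projective (image f))
    (hx : Injective (image x) ∧ Projective (image x))
    (hy : Injective (image y) ∧ Projective (image y)) :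
    (Injective (image f') ∧ Projective (image f')) ∧
      (Injective (image (x ≫ f')) ∧ Projective (image (x ≫ f'))) := by
  obtain ⟨hX'i, hX'p⟩ := hX'
  obtain ⟨hfi, hfp⟩ := hf
  obtain ⟨hxi, hxp⟩ := hx
  obtain ⟨hyi, hyp⟩ := hy
  obtain ⟨w0, hex⟩ := ws
  -- the diagonal sequence through the image of `biprod.lift f x`
  have hι0 : image.ι (biprod.lift f x) ≫ biprod.desc y (-f') = 0 := by
    rw [← cancel_epi (factorThruImage (biprod.lift f x)), ← Category.assoc, image.fac,
      comp_zero]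
    exact w0
  have hex' : (ShortComplex.mk (image.ι (biprod.lift f x)) (biprod.desc y (-f')) hι0).Exact := by
    let φ : ShortComplex.mk (biprod.lift f x) (biprod.desc y (-f')) w0 ⟶
        ShortComplex.mk (image.ι (biprod.lift f x)) (biprod.desc y (-f')) hι0 :=
      { τ₁ := factorThruImage (biprod.lift f x), τ₂ := 𝟙 _, τ₃ := 𝟙 _ }
    exact (ShortComplex.exact_iff_of_epi_of_isIso_of_mono φ).1 hex
  have lift_ex : ∀ {W : A} (w' : W ⟶ Y ⊞ X'), w' ≫ biprod.desc y (-f') = 0 →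
      ∃ l : W ⟶ image (biprod.lift f x), l ≫ image.ι (biprod.lift f x) = w' := by
    intro W w' hw'
    haveI : Mono (ShortComplex.mk (image.ι (biprod.lift f x)) (biprod.desc y (-f')) hι0).f := by
      dsimp; infer_instance
    exact ⟨hex'.lift w' hw', hex'.lift_f w' hw'⟩
  haveI : StrongEpi (factorThruImage (biprod.lift f x)) := strongEpi_of_epi _
  haveI : StrongEpi (factorThruImage f) := strongEpi_of_epi _
  haveI : StrongEpi (factorThruImage x) := strongEpi_of_epi _
  -- δf : image (biprod.lift f x) ⟶ image f
  obtain ⟨δf, hδf₁, hδf₂⟩ : ∃ δ : image (biprod.lift f x) ⟶ image f,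
      factorThruImage (biprod.lift f x) ≫ δ = factorThruImage f ∧
        δ ≫ image.ι f = image.ι (biprod.lift f x) ≫ biprod.fst := by
    have sq : CommSq (factorThruImage f) (factorThruImage (biprod.lift f x)) (image.ι f)
        (image.ι (biprod.lift f x) ≫ biprod.fst) := ⟨by simp⟩
    exact ⟨sq.lift, sq.fac_left, sq.fac_right⟩
  -- δx : image (biprod.lift f x) ⟶ image x
  obtain ⟨δx, hδx₁, hδx₂⟩ : ∃ δ : image (biprod.lift f x) ⟶ image x,
      factorThruImage (biprod.lift f x) ≫ δ = factorThruImage x ∧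
        δ ≫ image.ι x = image.ι (biprod.lift f x) ≫ biprod.snd := by
    have sq : CommSq (factorThruImage x) (factorThruImage (biprod.lift f x)) (image.ι x)
        (image.ι (biprod.lift f x) ≫ biprod.snd) := ⟨by simp⟩
    exact ⟨sq.lift, sq.fac_left, sq.fac_right⟩
  -- `ker y ≤ im f` : a morphism k with k ≫ image.ι f = kernel.ι y
  obtain ⟨k, hk⟩ : ∃ k : kernel y ⟶ image f, k ≫ image.ι f = kernel.ι y := by
    obtain ⟨ly, hly⟩ := lift_ex (biprod.lift (kernel.ι y) 0)
      (by simp [biprod.lift_desc])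
    refine ⟨ly ≫ δf, ?_⟩
    rw [Category.assoc, hδf₂, ← Category.assoc, hly, biprod.lift_fst]
  -- `ker f' ≤ im x` : a morphism k' with k' ≫ image.ι x = kernel.ι f'
  obtain ⟨k', hk'⟩ : ∃ k' : kernel f' ⟶ image x, k' ≫ image.ι x = kernel.ι f' := by
    obtain ⟨lx, hlx⟩ := lift_ex (biprod.lift 0 (kernel.ι f'))
      (by simp [biprod.lift_desc])
    refine ⟨lx ≫ δx, ?_⟩
    rw [Category.assoc, hδx₂, ← Category.assoc, hlx, biprod.lift_snd]
  -- retraction of `image f ⟶ Y`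
  haveI := hfi
  obtain ⟨r, hr⟩ : ∃ r : Y ⟶ image f, image.ι f ≫ r = 𝟙 (image f) :=
    ⟨Injective.factorThru (𝟙 _) (image.ι f), Injective.comp_factorThru _ _⟩
  -- retraction of `image x ⟶ X'`
  haveI := hxi
  obtain ⟨rx, hrx⟩ : ∃ r : X' ⟶ image x, image.ι x ≫ r = 𝟙 (image x) :=
    ⟨Injective.factorThru (𝟙 _) (image.ι x), Injective.comp_factorThru _ _⟩
  -- τ : image f ⟶ image (f ≫ y)
  obtain ⟨τ, hτ₁, hτ₂⟩ : ∃ τ : image f ⟶ image (f ≫ y),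
      factorThruImage f ≫ τ = factorThruImage (f ≫ y) ∧
        τ ≫ image.ι (f ≫ y) = image.ι f ≫ y := by
    have sq : CommSq (factorThruImage (f ≫ y)) (factorThruImage f) (image.ι (f ≫ y))
        (image.ι f ≫ y) := ⟨by simp⟩
    exact ⟨sq.lift, sq.fac_left, sq.fac_right⟩
  -- θ : image x ⟶ image y
  obtain ⟨θ, hθ₁, hθ₂⟩ : ∃ θ : image x ⟶ image y,
      factorThruImage x ≫ θ = f ≫ factorThruImage y ∧
        θ ≫ image.ι y = image.ι x ≫ f' := by
    have sq : CommSq (f ≫ factorThruImage y) (factorThruImage x) (image.ι y)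
        (image.ι x ≫ f') := ⟨by simp [comm]⟩
    exact ⟨sq.lift, sq.fac_left, sq.fac_right⟩
  -- μ : image (f ≫ y) ⟶ image y
  obtain ⟨μ, hμ₁, hμ₂⟩ : ∃ μ : image (f ≫ y) ⟶ image y,
      factorThruImage (f ≫ y) ≫ μ = f ≫ factorThruImage y ∧
        μ ≫ image.ι y = image.ι (f ≫ y) := by
    let F : MonoFactorisation (f ≫ y) :=
      { I := image y, m := image.ι y, e := f ≫ factorThruImage y, fac := by simp }
    exact ⟨image.lift F, image.fac_lift F, image.lift_fac F⟩
  -- the retraction ρ : image y ⟶ image (f ≫ y)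
  have hκy : kernel.ι (factorThruImage y) ≫ y = 0 := by
    have h1 : kernel.ι (factorThruImage y) ≫ factorThruImage y ≫ image.ι y = 0 := by
      rw [← Category.assoc, kernel.condition, zero_comp]
    simpa using h1
  have hlam : kernel.lift y (kernel.ι (factorThruImage y)) hκy ≫ kernel.ι y =
      kernel.ι (factorThruImage y) := kernel.lift_ι _ _ _
  have hkr : kernel.ι y ≫ r = k := by
    rw [← hk, Category.assoc, hr, Category.comp_id]
  have hker : kernel.ι (factorThruImage y) ≫ (r ≫ τ) = 0 := by
    rw [← cancel_mono (image.ι (f ≫ y)), Category.assoc, Category.assoc, hτ₂, zero_comp,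
      ← hlam, Category.assoc, reassoc_of% hkr, reassoc_of% hk, kernel.condition, comp_zero]
  obtain ⟨ρ, hρ⟩ : ∃ ρ : image y ⟶ image (f ≫ y), factorThruImage y ≫ ρ = r ≫ τ :=
    ⟨Abelian.epiDesc _ _ hker, Abelian.comp_epiDesc _ _ hker⟩
  have hfr : f ≫ r = factorThruImage f := by
    have h1 : (factorThruImage f ≫ image.ι f) ≫ r = factorThruImage f := by
      rw [Category.assoc, hr, Category.comp_id]
    simpa using h1
  have hμρ : μ ≫ ρ = 𝟙 (image (f ≫ y)) := by
    rw [← cancel_epi (factorThruImage (f ≫ y)), Category.comp_id, ← Category.assoc, hμ₁,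
      Category.assoc, hρ, ← Category.assoc, hfr, hτ₁]
  -- conclusion for the image of x ≫ f' = f ≫ y
  have hS0 : Injective (image (f ≫ y)) ∧ Projective (image (f ≫ y)) :=
    ⟨injective_of_retract'' μ ρ hμρ hyi, projective_of_retract'' μ ρ hμρ hyp⟩
  -- ν : image (f ≫ y) ⟶ image f'
  obtain ⟨ν, hν₁, hν₂⟩ : ∃ ν : image (f ≫ y) ⟶ image f',
      factorThruImage (f ≫ y) ≫ ν = x ≫ factorThruImage f' ∧
        ν ≫ image.ι f' = image.ι (f ≫ y) := by
    let F : MonoFactorisation (f ≫ y) :=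
      { I := image f', m := image.ι f', e := x ≫ factorThruImage f',
        fac := by rw [Category.assoc, image.fac]; exact comm.symm }
    exact ⟨image.lift F, image.fac_lift F, image.lift_fac F⟩
  -- kernel of factorThruImage f'
  have hκf' : kernel.ι (factorThruImage f') ≫ f' = 0 := by
    have h1 : kernel.ι (factorThruImage f') ≫ factorThruImage f' ≫ image.ι f' = 0 := by
      rw [← Category.assoc, kernel.condition, zero_comp]
    simpa using h1
  have hlam' : kernel.lift f' (kernel.ι (factorThruImage f')) hκf' ≫ kernel.ι f' =
      kernel.ι (factorThruImage f') := kernel.lift_ι _ _ _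
  have hkrx : kernel.ι f' ≫ rx = k' := by
    rw [← hk', Category.assoc, hrx, Category.comp_id]
  have hk'θ : k' ≫ θ = 0 := by
    rw [← cancel_mono (image.ι y), Category.assoc, hθ₂, ← Category.assoc, hk',
      kernel.condition, zero_comp]
  -- β₁ : image f' ⟶ image y
  have hb1 : kernel.ι (factorThruImage f') ≫ (rx ≫ θ) = 0 := by
    rw [← hlam', Category.assoc, ← Category.assoc (kernel.ι f'), hkrx, hk'θ, comp_zero]
  obtain ⟨β₁, hβ₁⟩ : ∃ β : image f' ⟶ image y, factorThruImage f' ≫ β = rx ≫ θ :=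
    ⟨Abelian.epiDesc _ _ hb1, Abelian.comp_epiDesc _ _ hb1⟩
  -- β₂ : image f' ⟶ X'
  have hb2 : kernel.ι (factorThruImage f') ≫ (𝟙 X' - rx ≫ image.ι x) = 0 := by
    rw [Preadditive.comp_sub, Category.comp_id, ← hlam', Category.assoc,
      ← Category.assoc (kernel.ι f'), hkrx, hk', sub_self]
  obtain ⟨β₂, hβ₂⟩ : ∃ β : image f' ⟶ X',
      factorThruImage f' ≫ β = 𝟙 X' - rx ≫ image.ι x :=
    ⟨Abelian.epiDesc _ _ hb2, Abelian.comp_epiDesc _ _ hb2⟩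
  -- θ ≫ ρ ≫ ν = image.ι x ≫ factorThruImage f'
  have hθρν : θ ≫ ρ ≫ ν = image.ι x ≫ factorThruImage f' := by
    rw [← cancel_epi (factorThruImage x), reassoc_of% hθ₁, reassoc_of% hρ,
      reassoc_of% hfr, reassoc_of% hτ₁, hν₁]
    conv_rhs => rw [← Category.assoc, image.fac]
  -- the retraction exhibiting image f' as a retract of image y ⊞ X'
  have hretr : biprod.lift β₁ β₂ ≫ biprod.desc (ρ ≫ ν) (factorThruImage f') =
      𝟙 (image f') := by
    rw [biprod.lift_desc, ← cancel_epi (factorThruImage f'), Category.comp_id,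
      Preadditive.comp_add, reassoc_of% hβ₁, hθρν, reassoc_of% hβ₂,
      Preadditive.sub_comp, Category.id_comp, Category.assoc]
    abel
  haveI := hX'i; haveI := hX'p; haveI := hyi; haveI := hyp
  have hbig : Injective (image y ⊞ X') ∧ Projective (image y ⊞ X') :=
    ⟨inferInstance, inferInstance⟩
  have hP : Injective (image f') ∧ Projective (image f') :=
    ⟨injective_of_retract'' _ _ hretr hbig.1, projective_of_retract'' _ _ hretr hbig.2⟩
  refine ⟨hP, ?_⟩
  rw [← comm]
  exact hS0
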